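/- Let γ₀ be a positive-definite density operator and O a Hermitian operator on a finite-dimensional Hilbert space, with O_c = O − Tr(Oγ₀)·I having eigenvalues {o_i}. Let P be the probability distribution assigning probability p_i = ⟨i|γ₀|i⟩ to o_i in an eigenbasis {|i⟩} of O_c. If the random variable O_c under P is sub-Gaussian with norm σ, then |Tr(γ₁O) − Tr(γ₀O)| ≤ σ·√(2 S(γ₁‖γ₀)) for any density operator γ₁. -/

import Mathlib

open Matrix ComplexOrder

namespace QFRI

variable {d : Type*} [Fintype d] [DecidableEq d]

open Complex Finset in
lemma triple_apply (C E : Matrix d d ℂ) (v : d → ℂ) (i l : d) :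
    (C * diagonal v * E) i l = ∑ k, C i k * v k * E k l := by
  rw [Matrix.mul_assoc, Matrix.mul_apply]
  simp [Matrix.diagonal_mul, mul_assoc]

open Complex Finset in
lemma H1 (C : Matrix d d ℂ) (w : d → ℝ) (k : d) :
    ((Cᴴ * diagonal (fun i => (w i : ℂ)) * C) k k).re = ∑ i, w i * ‖C i k‖^2 := by
  rw [triple_apply, Complex.re_sum]
  congr 1; ext i
  rw [Matrix.conjTranspose_apply, Complex.star_def]
  rw [show (starRingEnd ℂ) (C i k) * (w i : ℂ) * C i k
      = (w i : ℂ) * (C i k * (starRingEnd ℂ) (C i k)) by ring, Complex.mul_conj']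
  rw [← Complex.ofReal_pow, ← Complex.ofReal_mul, Complex.ofReal_re]

open Complex Finset in
lemma H2 (N : Matrix d d ℂ) (j : d) : ((N * Nᴴ) j j).re = ∑ k, ‖N j k‖^2 := by
  rw [Matrix.mul_apply, Complex.re_sum]
  congr 1; ext k
  rw [Matrix.conjTranspose_apply, Complex.star_def, Complex.mul_conj',
    ← Complex.ofReal_pow, Complex.ofReal_re]

open Complex Finset in
lemma H2' (N : Matrix d d ℂ) (k : d) : ((Nᴴ * N) k k).re = ∑ j, ‖N j k‖^2 := by
  rw [Matrix.mul_apply, Complex.re_sum]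
  congr 1; ext j
  rw [Matrix.conjTranspose_apply, Complex.star_def]
  rw [show (starRingEnd ℂ) (N j k) * N j k = N j k * (starRingEnd ℂ) (N j k) by ring,
    Complex.mul_conj', ← Complex.ofReal_pow, Complex.ofReal_re]

open Complex Finset in
lemma row_norm_sum (A : Matrix d d ℂ) (hA1 : A * Aᴴ = 1) (i : d) :
    ∑ j, ‖A i j‖^2 = 1 := by
  have h : (A * Aᴴ) i i = (1 : Matrix d d ℂ) i i := by rw [hA1]
  rw [Matrix.one_apply_eq] at h
  have h2 := H2 A i
  rw [h] at h2
  simpa using h2.symm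

open Complex Finset in
lemma col_norm_sum (A : Matrix d d ℂ) (hA2 : Aᴴ * A = 1) (j : d) :
    ∑ i, ‖A i j‖^2 = 1 := by
  have h : (Aᴴ * A) j j = (1 : Matrix d d ℂ) j j := by rw [hA2]
  rw [Matrix.one_apply_eq] at h
  have h2 := H2' A j
  rw [h] at h2
  simpa using h2.symm

lemma re_le_norm' (z : ℂ) : z.re ≤ ‖z‖ :=
  le_trans (le_abs_self _) (by exact Complex.abs_re_le_norm z)

open Complex Finset in
lemma cs_step (A B : Matrix d d ℂ) (hA1 : A * Aᴴ = 1) (hB1 : B * Bᴴ = 1)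
    (g ν : d → ℝ) (hg : ∀ j, 0 < g j) (hν : ∀ k, 0 < ν k) (s : ℝ) (hs : 0 ≤ s) :
    ∑ i, (∑ k, ‖B i k‖^2 * ν k)^2 / ((∑ j, ‖A i j‖^2 * g j) + s * (∑ k, ‖B i k‖^2 * ν k))
      ≤ ∑ j, ∑ k, (ν k)^2 * ‖(Aᴴ * B) j k‖^2 / (g j + s * ν k) := by
  set q : d → ℝ := fun i => ∑ k, ‖B i k‖^2 * ν k with hq_def
  set p : d → ℝ := fun i => ∑ j, ‖A i j‖^2 * g j with hp_def
  have hq0 : ∀ i, 0 ≤ q i := fun i =>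
    Finset.sum_nonneg fun k _ => mul_nonneg (sq_nonneg _) (hν k).le
  have hp0 : ∀ i, 0 < p i := by
    intro i
    have hge : 0 ≤ p i := Finset.sum_nonneg fun j _ => mul_nonneg (sq_nonneg _) (hg j).le
    rcases eq_or_lt_of_le hge with h0 | h
    · exfalso
      have hz := (Finset.sum_eq_zero_iff_of_nonneg
        (fun j _ => mul_nonneg (sq_nonneg (‖A i j‖)) (hg j).le)).mp h0.symm
      have : ∑ j, ‖A i j‖^2 = 0 := by
        refine Finset.sum_eq_zero fun j _ => ?_
        have := hz j (Finset.mem_univ j)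
        rcases mul_eq_zero.mp this with h' | h'
        · exact h'
        · exact absurd h' (hg j).ne'
      rw [row_norm_sum A hA1 i] at this
      norm_num at this
    · exact h
  have hden : ∀ i, 0 < p i + s * q i := fun i =>
    add_pos_of_pos_of_nonneg (hp0 i) (mul_nonneg hs (hq0 i))
  set dd : d → ℝ := fun i => q i / (p i + s * q i) with hdd_def
  have hdd0 : ∀ i, 0 ≤ dd i := fun i => div_nonneg (hq0 i) (hden i).le
  set DD : Matrix d d ℂ := diagonal (fun i => (dd i : ℂ)) with hDD_def
  set M : Matrix d d ℂ := Aᴴ * B with hM_def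
  set N : Matrix d d ℂ := Aᴴ * DD * B with hN_def
  set w : d → d → ℝ := fun j k => g j + s * ν k with hw_def
  have hw : ∀ j k, 0 < w j k := fun j k =>
    add_pos_of_pos_of_nonneg (hg j) (mul_nonneg hs (hν k).le)
  set L : ℝ := ∑ i, dd i * q i with hL_def
  -- identity (a)
  have hMN : Mᴴ * N = Bᴴ * DD * B := by
    rw [hM_def, hN_def, conjTranspose_mul, conjTranspose_conjTranspose]
    simp only [← mul_assoc]
    rw [mul_assoc Bᴴ A Aᴴ, hA1, mul_one]
  have ha : ∑ k, ν k * ((Mᴴ * N) k k).re = L := by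
    rw [hMN]
    have : ∀ k, ((Bᴴ * DD * B) k k).re = ∑ i, dd i * ‖B i k‖^2 := fun k => H1 B dd k
    simp_rw [this, Finset.mul_sum]
    rw [Finset.sum_comm, hL_def]
    congr 1; ext i
    rw [hq_def, Finset.mul_sum]
    congr 1; ext k
    ring
  -- identity (c)
  have hDDconj : DDᴴ = DD := by
    rw [hDD_def, diagonal_conjTranspose]
    apply congrArg
    funext i
    simp [Pi.star_apply, Complex.star_def, Complex.conj_ofReal]
  have hDD2 : DD * DD = diagonal (fun i => ((dd i^2 : ℝ) : ℂ)) := by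
    rw [hDD_def, diagonal_mul_diagonal]
    apply congrArg
    funext i
    rw [Complex.ofReal_pow, sq]
  have hNNH : N * Nᴴ = Aᴴ * diagonal (fun i => ((dd i^2 : ℝ) : ℂ)) * A := by
    rw [hN_def, conjTranspose_mul, conjTranspose_mul, hDDconj, conjTranspose_conjTranspose]
    simp only [← mul_assoc]
    rw [mul_assoc (Aᴴ * DD) B Bᴴ, hB1, mul_one, mul_assoc Aᴴ DD DD, hDD2]
  have hNHN : Nᴴ * N = Bᴴ * diagonal (fun i => ((dd i^2 : ℝ) : ℂ)) * B := by
    rw [hN_def, conjTranspose_mul, conjTranspose_mul, hDDconj, conjTranspose_conjTranspose]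
    simp only [← mul_assoc]
    rw [mul_assoc (Bᴴ * DD) A Aᴴ, hA1, mul_one, mul_assoc Bᴴ DD DD, hDD2]
  have hc : ∑ j, ∑ k, w j k * ‖N j k‖^2 = ∑ i, dd i^2 * (p i + s * q i) := by
    have split : ∀ j k, w j k * ‖N j k‖^2 = g j * ‖N j k‖^2 + s * (ν k * ‖N j k‖^2) := by
      intro j k; rw [hw_def]; ring
    simp_rw [split, Finset.sum_add_distrib]
    have e1 : ∑ j, ∑ k, g j * ‖N j k‖^2 = ∑ i, dd i^2 * p i := by
      have : ∀ j, ∑ k, g j * ‖N j k‖^2 = g j * ((N * Nᴴ) j j).re := by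
        intro j; rw [H2, Finset.mul_sum]
      simp_rw [this, hNNH]
      have : ∀ j, ((Aᴴ * diagonal (fun i => ((dd i^2 : ℝ) : ℂ)) * A) j j).re
          = ∑ i, dd i^2 * ‖A i j‖^2 := fun j => H1 A (fun i => dd i^2) j
      simp_rw [this, Finset.mul_sum]
      rw [Finset.sum_comm]
      congr 1; ext i
      rw [hp_def, Finset.mul_sum]
      congr 1; ext j
      ring
    have e2 : ∑ j, ∑ k, s * (ν k * ‖N j k‖^2) = ∑ i, dd i^2 * (s * q i) := by
      rw [Finset.sum_comm]
      have : ∀ k, ∑ j, s * (ν k * ‖N j k‖^2) = s * (ν k * ((Nᴴ * N) k k).re) := by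
        intro k; rw [H2', Finset.mul_sum, Finset.mul_sum]
      simp_rw [this, hNHN]
      have : ∀ k, ((Bᴴ * diagonal (fun i => ((dd i^2 : ℝ) : ℂ)) * B) k k).re
          = ∑ i, dd i^2 * ‖B i k‖^2 := fun k => H1 B (fun i => dd i^2) k
      simp_rw [this, Finset.mul_sum]
      rw [Finset.sum_comm]
      congr 1; ext i
      rw [hq_def, Finset.mul_sum, Finset.mul_sum]
      congr 1; ext k
      ring
    rw [e1, e2]
    rw [← Finset.sum_add_distrib]
    congr 1; ext i
    ring
  -- Cauchy-Schwarz setup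
  set X : d × d → ℝ := fun jk => ν jk.2 * ‖M jk.1 jk.2‖ / Real.sqrt (w jk.1 jk.2) with hX_def
  set Y : d × d → ℝ := fun jk => Real.sqrt (w jk.1 jk.2) * ‖N jk.1 jk.2‖ with hY_def
  have hsqrt_pos : ∀ (j k : d), 0 < Real.sqrt (w j k) := fun j k => Real.sqrt_pos.mpr (hw j k)
  have hXY : ∀ jk : d × d, X jk * Y jk = ν jk.2 * (‖M jk.1 jk.2‖ * ‖N jk.1 jk.2‖) := by
    intro jk
    rw [hX_def, hY_def]
    have h := (hsqrt_pos jk.1 jk.2).ne'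
    field_simp
  have hX2 : ∀ jk : d × d, X jk ^ 2 = (ν jk.2)^2 * ‖M jk.1 jk.2‖^2 / w jk.1 jk.2 := by
    intro jk
    rw [hX_def]
    rw [div_pow, mul_pow, Real.sq_sqrt (hw jk.1 jk.2).le]
  have hY2 : ∀ jk : d × d, Y jk ^ 2 = w jk.1 jk.2 * ‖N jk.1 jk.2‖^2 := by
    intro jk
    rw [hY_def, mul_pow, Real.sq_sqrt (hw jk.1 jk.2).le]
  have hsumY2 : ∑ jk : d × d, Y jk ^ 2 = L := by
    simp_rw [hY2]
    rw [Fintype.sum_prod_type, hc, hL_def]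
    congr 1; ext i
    have h := (hden i).ne'
    rw [hdd_def]
    field_simp
  have hsumX2 : ∑ jk : d × d, X jk ^ 2
      = ∑ j, ∑ k, (ν k)^2 * ‖(Aᴴ * B) j k‖^2 / (g j + s * ν k) := by
    simp_rw [hX2]
    rw [Fintype.sum_prod_type]
  -- L ≤ ∑ X * Y
  have hL_le : L ≤ ∑ jk : d × d, X jk * Y jk := by
    have hTre : L = (∑ jk : d × d, (ν jk.2 : ℂ) *
        ((starRingEnd ℂ) (M jk.1 jk.2) * N jk.1 jk.2)).re := by
      rw [Complex.re_sum, Fintype.sum_prod_type, Finset.sum_comm, ← ha]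
      congr 1; ext k
      rw [Matrix.mul_apply, Complex.re_sum, Finset.mul_sum]
      congr 1; ext j
      rw [Matrix.conjTranspose_apply, Complex.star_def, Complex.re_ofReal_mul]
    rw [hTre]
    calc (∑ jk : d × d, (ν jk.2 : ℂ) * ((starRingEnd ℂ) (M jk.1 jk.2) * N jk.1 jk.2)).re
        ≤ ‖∑ jk : d × d, (ν jk.2 : ℂ) * ((starRingEnd ℂ) (M jk.1 jk.2) * N jk.1 jk.2)‖ :=
          re_le_norm' _
      _ ≤ ∑ jk : d × d, ‖(ν jk.2 : ℂ) * ((starRingEnd ℂ) (M jk.1 jk.2) * N jk.1 jk.2)‖ :=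
          norm_sum_le _ _
      _ = ∑ jk : d × d, X jk * Y jk := by
          congr 1; ext jk
          rw [hXY jk, norm_mul, norm_mul, Complex.norm_real, RCLike.norm_conj]
          rw [Real.norm_eq_abs, abs_of_pos (hν jk.2)]
  have hCS := Finset.sum_mul_sq_le_sq_mul_sq Finset.univ X Y
  have hL0 : 0 ≤ L := Finset.sum_nonneg fun i _ => mul_nonneg (hdd0 i) (hq0 i)
  have hR0 : 0 ≤ ∑ j, ∑ k, (ν k)^2 * ‖(Aᴴ * B) j k‖^2 / (g j + s * ν k) :=
    Finset.sum_nonneg fun j _ => Finset.sum_nonneg fun k _ =>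
      div_nonneg (mul_nonneg (sq_nonneg _) (sq_nonneg _)) (hw j k).le
  have hgoalL : ∑ i, q i^2 / (p i + s * q i) = L := by
    rw [hL_def]
    congr 1; ext i
    rw [hdd_def, sq]
    rw [div_mul_eq_mul_div]
  rw [hgoalL]
  rcases eq_or_lt_of_le hL0 with h0 | hLpos
  · rw [← h0]; exact hR0
  · rw [hsumX2, hsumY2] at hCS
    nlinarith [hL_le, hCS, hLpos]
lemma hasDerivAt_log_shift (c T : ℝ) (h : 0 < c + T) :
    HasDerivAt (fun T => Real.log (c + T)) (c + T)⁻¹ T := by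
  have h1 : HasDerivAt (fun T : ℝ => c + T) 1 T := (hasDerivAt_id T).const_add c
  have h2 := (Real.hasDerivAt_log h.ne').comp T h1
  rw [mul_one] at h2
  exact h2

lemma tendsto_log_shift_sub (c : ℝ) (hc : 0 < c) :
    Filter.Tendsto (fun T => Real.log (c + T) - Real.log (1 + T))
      Filter.atTop (nhds 0) := by
  have h0 : Filter.Tendsto (fun T : ℝ => (1 + T)⁻¹) Filter.atTop (nhds 0) := by
    apply Filter.Tendsto.comp tendsto_inv_atTop_zero
    exact Filter.tendsto_atTop_add_const_left _ 1 Filter.tendsto_id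
  have h1 : Filter.Tendsto (fun T : ℝ => 1 + (c - 1) * (1 + T)⁻¹) Filter.atTop (nhds 1) := by
    have := (h0.const_mul (c - 1)).const_add 1
    simpa using this
  have h2 : Filter.Tendsto (fun T : ℝ => (c + T) / (1 + T)) Filter.atTop (nhds 1) := by
    apply h1.congr'
    filter_upwards [Filter.eventually_gt_atTop (0 : ℝ)] with T hT
    have h1T : (1 : ℝ) + T ≠ 0 := by positivity
    field_simp
    ring
  have h3 := (Real.continuousAt_log one_ne_zero).tendsto.comp h2
  rw [Real.log_one] at h3
  apply h3.congr'
  filter_upwards [Filter.eventually_gt_atTop (0 : ℝ)] with T hT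
  rw [Function.comp_apply, Real.log_div (by positivity) (by positivity)]

lemma log_sum_ineq {ι κ : Type*} [Fintype ι] [Fintype κ]
    (q p : ι → ℝ) (hq : ∀ i, 0 < q i) (hp : ∀ i, 0 < p i) (hqs : ∑ i, q i = 1)
    (m lam : κ → ℝ) (hm : ∀ b, 0 ≤ m b) (hlam : ∀ b, 0 < lam b)
    (hms : ∑ b, m b = 1)
    (H : ∀ s : ℝ, 0 ≤ s → ∑ i, (q i)^2 / (p i + s * q i) ≤ ∑ b, m b / (lam b + s)) :
    ∑ i, q i * Real.log (q i / p i) ≤ - ∑ b, m b * Real.log (lam b) := by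
  set h : ℝ → ℝ := fun T =>
    (∑ i, q i * Real.log (p i / q i + T)) - ∑ b, m b * Real.log (lam b + T) with hh_def
  have hpq : ∀ i, 0 < p i / q i := fun i => div_pos (hp i) (hq i)
  have hD : ∀ T : ℝ, 0 ≤ T → HasDerivAt h
      ((∑ i, q i * (p i / q i + T)⁻¹) - ∑ b, m b * (lam b + T)⁻¹) T := by
    intro T hT
    apply HasDerivAt.sub
    · apply HasDerivAt.fun_sum
      intro i _
      exact (hasDerivAt_log_shift _ T (add_pos_of_pos_of_nonneg (hpq i) hT)).const_mul (q i)
    · apply HasDerivAt.fun_sum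
      intro b _
      exact (hasDerivAt_log_shift _ T (add_pos_of_pos_of_nonneg (hlam b) hT)).const_mul (m b)
  have hderiv_nonpos : ∀ T : ℝ, 0 ≤ T →
      (∑ i, q i * (p i / q i + T)⁻¹) - ∑ b, m b * (lam b + T)⁻¹ ≤ 0 := by
    intro T hT
    have e1 : ∀ i, q i * (p i / q i + T)⁻¹ = (q i)^2 / (p i + T * q i) := by
      intro i
      have h1 : p i + T * q i > 0 := add_pos_of_pos_of_nonneg (hp i) (mul_nonneg hT (hq i).le)
      rw [show p i / q i + T = (p i + T * q i) / q i by
        rw [add_div, mul_div_assoc, div_self (hq i).ne', mul_one]]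
      rw [inv_div, sq]
      exact (mul_div_assoc (q i) (q i) _).symm
    have e2 : ∀ b, m b * (lam b + T)⁻¹ = m b / (lam b + T) := fun b => by
      rw [div_eq_mul_inv]
    simp_rw [e1, e2]
    have := H T hT
    linarith
  have hanti : AntitoneOn h (Set.Ici (0:ℝ)) := by
    apply antitoneOn_of_deriv_nonpos (convex_Ici 0)
    · intro T hT
      exact ((hD T hT).continuousAt).continuousWithinAt
    · intro T hT
      rw [interior_Ici] at hT
      exact ((hD T (le_of_lt hT)).differentiableAt).differentiableWithinAt
    · intro T hT
      rw [interior_Ici] at hT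
      rw [(hD T (le_of_lt hT)).deriv]
      exact hderiv_nonpos T (le_of_lt hT)
  have htend : Filter.Tendsto h Filter.atTop (nhds 0) := by
    have hform : ∀ T : ℝ, h T =
        (∑ i, q i * (Real.log (p i / q i + T) - Real.log (1 + T)))
          - ∑ b, m b * (Real.log (lam b + T) - Real.log (1 + T)) := by
      intro T
      rw [hh_def]
      simp only [mul_sub]
      rw [Finset.sum_sub_distrib, Finset.sum_sub_distrib, ← Finset.sum_mul, ← Finset.sum_mul,
        hqs, hms]
      ring
    have t1 : Filter.Tendsto (fun T => ∑ i, q i * (Real.log (p i / q i + T) - Real.log (1 + T)))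
        Filter.atTop (nhds 0) := by
      have := tendsto_finset_sum Finset.univ
        (fun i (_ : i ∈ Finset.univ) => (tendsto_log_shift_sub _ (hpq i)).const_mul (q i))
      simpa using this
    have t2 : Filter.Tendsto (fun T => ∑ b, m b * (Real.log (lam b + T) - Real.log (1 + T)))
        Filter.atTop (nhds 0) := by
      have := tendsto_finset_sum Finset.univ
        (fun b (_ : b ∈ Finset.univ) => (tendsto_log_shift_sub _ (hlam b)).const_mul (m b))
      simpa using this
    have := t1.sub t2
    rw [sub_zero] at this
    exact this.congr fun T => (hform T).symm
  have h0_ge : 0 ≤ h 0 := by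
    apply le_of_tendsto htend
    filter_upwards [Filter.eventually_ge_atTop (0 : ℝ)] with T hT
    exact hanti (Set.mem_Ici.mpr le_rfl) (Set.mem_Ici.mpr hT) hT
  have h0_eq : h 0 = (∑ i, q i * Real.log (p i / q i)) - ∑ b, m b * Real.log (lam b) := by
    rw [hh_def]; simp
  have hflip : ∑ i, q i * Real.log (q i / p i) = - ∑ i, q i * Real.log (p i / q i) := by
    rw [← Finset.sum_neg_distrib]
    congr 1; ext i
    rw [show q i / p i = (p i / q i)⁻¹ by rw [inv_div], Real.log_inv]
    ring
  rw [hflip]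
  rw [h0_eq] at h0_ge
  linarith

lemma gibbs_ineq {ι : Type*} [Fintype ι] (q p o : ι → ℝ) (hq : ∀ i, 0 < q i)
    (hp : ∀ i, 0 < p i) (hqs : ∑ i, q i = 1) (t : ℝ) :
    t * ∑ i, q i * o i ≤ (∑ i, q i * Real.log (q i / p i))
      + Real.log (∑ i, p i * Real.exp (t * o i)) := by
  have hne : Nonempty ι := by
    by_contra hcon
    rw [not_nonempty_iff] at hcon
    rw [Finset.univ_eq_empty, Finset.sum_empty] at hqs
    norm_num at hqs
  set Z : ℝ := ∑ i, p i * Real.exp (t * o i) with hZ_def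
  have hZ : 0 < Z :=
    Finset.sum_pos (fun i _ => mul_pos (hp i) (Real.exp_pos _)) Finset.univ_nonempty
  have key : ∑ i, q i * Real.log ((p i * Real.exp (t * o i) / Z) / q i) ≤ 0 := by
    have hle : ∀ i, q i * Real.log ((p i * Real.exp (t * o i) / Z) / q i)
        ≤ p i * Real.exp (t * o i) / Z - q i := by
      intro i
      have harg : 0 < (p i * Real.exp (t * o i) / Z) / q i :=
        div_pos (div_pos (mul_pos (hp i) (Real.exp_pos _)) hZ) (hq i)
      have := Real.log_le_sub_one_of_pos harg
      have h2 : q i * Real.log ((p i * Real.exp (t * o i) / Z) / q i)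
          ≤ q i * ((p i * Real.exp (t * o i) / Z) / q i - 1) :=
        mul_le_mul_of_nonneg_left this (hq i).le
      calc q i * Real.log ((p i * Real.exp (t * o i) / Z) / q i)
          ≤ q i * ((p i * Real.exp (t * o i) / Z) / q i - 1) := h2
        _ = p i * Real.exp (t * o i) / Z - q i := by
            rw [mul_sub, mul_one, mul_comm (q i), div_mul_cancel₀ _ (hq i).ne']
    calc ∑ i, q i * Real.log ((p i * Real.exp (t * o i) / Z) / q i)
        ≤ ∑ i, (p i * Real.exp (t * o i) / Z - q i) := Finset.sum_le_sum fun i _ => hle i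
      _ = (∑ i, p i * Real.exp (t * o i)) / Z - ∑ i, q i := by
          rw [Finset.sum_sub_distrib, ← Finset.sum_div]
      _ = 0 := by rw [← hZ_def, div_self hZ.ne', hqs]; ring
  have expand : ∀ i, q i * Real.log ((p i * Real.exp (t * o i) / Z) / q i)
      = q i * (t * o i) - q i * Real.log (q i / p i) - q i * Real.log Z := by
    intro i
    rw [Real.log_div (div_pos (mul_pos (hp i) (Real.exp_pos _)) hZ).ne' (hq i).ne',
      Real.log_div (mul_pos (hp i) (Real.exp_pos _)).ne' hZ.ne',
      Real.log_mul (hp i).ne' (Real.exp_pos _).ne', Real.log_exp,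
      Real.log_div (hq i).ne' (hp i).ne']
    ring
  simp_rw [expand] at key
  rw [Finset.sum_sub_distrib, Finset.sum_sub_distrib, ← Finset.sum_mul] at key
  rw [hqs, one_mul] at key
  have hto : ∑ i, q i * (t * o i) = t * ∑ i, q i * o i := by
    rw [Finset.mul_sum]
    congr 1; ext i; ring
  rw [hto] at key
  linarith

lemma opt_ineq (m S σ : ℝ) (hS : 0 ≤ S) (hσ : 0 ≤ σ)
    (H : ∀ t : ℝ, t * m ≤ S + σ^2 * t^2 / 2) : |m| ≤ σ * Real.sqrt (2 * S) := by
  have key : ∀ m' : ℝ, (∀ t : ℝ, t * m' ≤ S + σ^2 * t^2 / 2) → m' ≤ σ * Real.sqrt (2 * S) := by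
    intro m' H'
    have hrhs : 0 ≤ σ * Real.sqrt (2 * S) := mul_nonneg hσ (Real.sqrt_nonneg _)
    rcases eq_or_lt_of_le hσ with hσ0 | hσpos
    · -- σ = 0
      by_contra hcon
      push_neg at hcon
      have hm' : 0 < m' := lt_of_le_of_lt hrhs hcon
      have := H' ((S + 1) / m')
      rw [← hσ0] at this
      rw [div_mul_cancel₀ _ hm'.ne'] at this
      norm_num at this
    · rcases eq_or_lt_of_le hS with hS0 | hSpos
      · -- S = 0
        rw [← hS0]
        simp only [mul_zero, Real.sqrt_zero]
        by_contra hcon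
        push_neg at hcon
        have ht := H' (m' / σ^2)
        rw [← hS0, zero_add] at ht
        have hσ2 : (0:ℝ) < σ^2 := pow_pos hσpos 2
        have hcalc : m' / σ^2 * m' = m'^2/σ^2 := by field_simp
        have hcalc2 : σ^2 * (m'/σ^2)^2/2 = m'^2/σ^2/2 := by field_simp
        rw [hcalc, hcalc2] at ht
        have hpos : 0 < m'^2/σ^2 := div_pos (pow_pos hcon 2) hσ2
        linarith
      · -- S > 0, σ > 0
        have hsq : 0 < Real.sqrt (2 * S) := Real.sqrt_pos.mpr (by linarith)
        have ht := H' (Real.sqrt (2 * S) / σ)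
        have hc : σ^2 * (Real.sqrt (2 * S) / σ)^2 / 2 = S := by
          rw [div_pow, Real.sq_sqrt (by linarith : (0:ℝ) ≤ 2 * S)]
          field_simp
        rw [hc] at ht
        have hm : Real.sqrt (2*S) * m' ≤ Real.sqrt (2*S) * (Real.sqrt (2*S) * σ) := by
          calc Real.sqrt (2*S) * m' = σ * (Real.sqrt (2*S)/σ * m') := by
                rw [← mul_assoc, ← mul_div_assoc, mul_div_cancel_left₀ _ hσpos.ne']
            _ ≤ σ * (S + S) := mul_le_mul_of_nonneg_left ht hσ
            _ = σ * (2 * S) := by ring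
            _ = σ * (Real.sqrt (2*S) * Real.sqrt (2*S)) := by
                rw [Real.mul_self_sqrt (by linarith : (0:ℝ) ≤ 2*S)]
            _ = Real.sqrt (2*S) * (Real.sqrt (2*S) * σ) := by ring
        calc m' ≤ Real.sqrt (2*S) * σ := le_of_mul_le_mul_left hm hsq
          _ = σ * Real.sqrt (2*S) := mul_comm _ _
  have h1 := key m H
  have h2 : -m ≤ σ * Real.sqrt (2 * S) := by
    apply key (-m)
    intro t
    have := H (-t)
    calc t * -m = -t * m := by ring
      _ ≤ S + σ^2 * (-t)^2/2 := this
      _ = S + σ^2 * t^2/2 := by ring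
  exact abs_le.mpr ⟨by linarith, h1⟩

open Complex Finset in
lemma key_scalar (A B : Matrix d d ℂ) (hA1 : A * Aᴴ = 1) (hA2 : Aᴴ * A = 1)
    (hB1 : B * Bᴴ = 1) (hB2 : Bᴴ * B = 1)
    (o g ν : d → ℝ) (hg : ∀ j, 0 < g j) (hν : ∀ k, 0 < ν k)
    (hgs : ∑ j, g j = 1) (hνs : ∑ k, ν k = 1)
    (σ : ℝ) (hσ : 0 ≤ σ)
    (hsub : ∀ t : ℝ, ∑ i, (∑ j, ‖A i j‖^2 * g j) * Real.exp (t * o i)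
      ≤ Real.exp (σ^2 * t^2 / 2)) :
    |∑ i, (∑ k, ‖B i k‖^2 * ν k) * o i|
      ≤ σ * Real.sqrt (2 * ((∑ k, ν k * Real.log (ν k))
          - ∑ j, ∑ k, ‖(Aᴴ * B) j k‖^2 * (ν k * Real.log (g j)))) := by
  set q : d → ℝ := fun i => ∑ k, ‖B i k‖^2 * ν k with hq_def
  set p : d → ℝ := fun i => ∑ j, ‖A i j‖^2 * g j with hp_def
  have hq0 : ∀ i, 0 < q i := by
    intro i
    have hge : 0 ≤ q i := Finset.sum_nonneg fun k _ => mul_nonneg (sq_nonneg _) (hν k).le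
    rcases eq_or_lt_of_le hge with h0 | h
    · exfalso
      have hz := (Finset.sum_eq_zero_iff_of_nonneg
        (fun k _ => mul_nonneg (sq_nonneg (‖B i k‖)) (hν k).le)).mp h0.symm
      have : ∑ k, ‖B i k‖^2 = 0 := by
        refine Finset.sum_eq_zero fun k _ => ?_
        rcases mul_eq_zero.mp (hz k (Finset.mem_univ k)) with h' | h'
        · exact h'
        · exact absurd h' (hν k).ne'
      rw [row_norm_sum B hB1 i] at this
      norm_num at this
    · exact h
  have hp0 : ∀ i, 0 < p i := by
    intro i
    have hge : 0 ≤ p i := Finset.sum_nonneg fun j _ => mul_nonneg (sq_nonneg _) (hg j).le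
    rcases eq_or_lt_of_le hge with h0 | h
    · exfalso
      have hz := (Finset.sum_eq_zero_iff_of_nonneg
        (fun j _ => mul_nonneg (sq_nonneg (‖A i j‖)) (hg j).le)).mp h0.symm
      have : ∑ j, ‖A i j‖^2 = 0 := by
        refine Finset.sum_eq_zero fun j _ => ?_
        rcases mul_eq_zero.mp (hz j (Finset.mem_univ j)) with h' | h'
        · exact h'
        · exact absurd h' (hg j).ne'
      rw [row_norm_sum A hA1 i] at this
      norm_num at this
    · exact h
  have hqsum : ∑ i, q i = 1 := by
    rw [hq_def]
    rw [Finset.sum_comm]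
    calc ∑ k, ∑ i, ‖B i k‖^2 * ν k = ∑ k, (∑ i, ‖B i k‖^2) * ν k := by
          congr 1; ext k; rw [Finset.sum_mul]
      _ = ∑ k, ν k := by
          congr 1; ext k; rw [col_norm_sum B hB2 k, one_mul]
      _ = 1 := hνs
  have hpsum : ∑ i, p i = 1 := by
    rw [hp_def]
    rw [Finset.sum_comm]
    calc ∑ j, ∑ i, ‖A i j‖^2 * g j = ∑ j, (∑ i, ‖A i j‖^2) * g j := by
          congr 1; ext j; rw [Finset.sum_mul]
      _ = ∑ j, g j := by
          congr 1; ext j; rw [col_norm_sum A hA2 j, one_mul]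
      _ = 1 := hgs
  -- unitarity of Aᴴ * B
  have hM1 : (Aᴴ * B) * (Aᴴ * B)ᴴ = 1 := by
    rw [conjTranspose_mul, conjTranspose_conjTranspose]
    calc Aᴴ * B * (Bᴴ * A) = Aᴴ * (B * Bᴴ) * A := by simp only [mul_assoc]
      _ = 1 := by rw [hB1, mul_one, hA2]
  have hM2 : (Aᴴ * B)ᴴ * (Aᴴ * B) = 1 := by
    rw [conjTranspose_mul, conjTranspose_conjTranspose]
    calc Bᴴ * A * (Aᴴ * B) = Bᴴ * (A * Aᴴ) * B := by simp only [mul_assoc]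
      _ = 1 := by rw [hA1, mul_one, hB2]
  set S' : ℝ := (∑ k, ν k * Real.log (ν k))
      - ∑ j, ∑ k, ‖(Aᴴ * B) j k‖^2 * (ν k * Real.log (g j)) with hS'_def
  set D : ℝ := ∑ i, q i * Real.log (q i / p i) with hD_def
  -- D ≤ S' by log_sum_ineq + cs_step
  have hD_le : D ≤ S' := by
    have hlsi := log_sum_ineq q p hq0 hp0 hqsum
      (fun b : d × d => ‖(Aᴴ * B) b.1 b.2‖^2 * ν b.2)
      (fun b : d × d => g b.1 / ν b.2)
      (fun b => mul_nonneg (sq_nonneg _) (hν b.2).le)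
      (fun b => div_pos (hg b.1) (hν b.2))
      ?hms ?hH
    case hms =>
      rw [Fintype.sum_prod_type]
      rw [Finset.sum_comm]
      calc ∑ k, ∑ j, ‖(Aᴴ * B) j k‖^2 * ν k = ∑ k, (∑ j, ‖(Aᴴ * B) j k‖^2) * ν k := by
            congr 1; ext k; rw [Finset.sum_mul]
        _ = ∑ k, ν k := by
            congr 1; ext k; rw [col_norm_sum (Aᴴ * B) hM2 k, one_mul]
        _ = 1 := hνs
    case hH =>
      intro s hs
      have hcs := cs_step A B hA1 hB1 g ν hg hν s hs
      rw [Fintype.sum_prod_type]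
      calc ∑ i, q i ^2 / (p i + s * q i)
          ≤ ∑ j, ∑ k, (ν k)^2 * ‖(Aᴴ * B) j k‖^2 / (g j + s * ν k) := hcs
        _ = ∑ j, ∑ k, ‖(Aᴴ * B) j k‖^2 * ν k / (g j / ν k + s) := by
            congr 1; ext j; congr 1; ext k
            rw [show g j / ν k + s = (g j + s * ν k) / ν k by
              rw [add_div, mul_div_assoc, div_self (hν k).ne', mul_one]]
            rw [div_div_eq_mul_div]
            ring
    calc D ≤ - ∑ b : d × d, (‖(Aᴴ * B) b.1 b.2‖^2 * ν b.2) * Real.log (g b.1 / ν b.2) := hlsi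
      _ = S' := by
        rw [hS'_def, ← Finset.sum_neg_distrib, Fintype.sum_prod_type]
        have : ∀ j k, -((‖(Aᴴ * B) j k‖^2 * ν k) * Real.log (g j / ν k))
            = ‖(Aᴴ * B) j k‖^2 * (ν k * Real.log (ν k))
              - ‖(Aᴴ * B) j k‖^2 * (ν k * Real.log (g j)) := by
          intro j k
          rw [Real.log_div (hg j).ne' (hν k).ne']
          ring
        simp_rw [this, Finset.sum_sub_distrib]
        congr 1
        rw [Finset.sum_comm]
        calc ∑ k, ∑ j, ‖(Aᴴ * B) j k‖^2 * (ν k * Real.log (ν k))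
            = ∑ k, (∑ j, ‖(Aᴴ * B) j k‖^2) * (ν k * Real.log (ν k)) := by
              congr 1; ext k; rw [Finset.sum_mul]
          _ = ∑ k, ν k * Real.log (ν k) := by
              congr 1; ext k; rw [col_norm_sum (Aᴴ * B) hM2 k, one_mul]
  have hD0 : 0 ≤ D := by
    have := gibbs_ineq q p o hq0 hp0 hqsum 0
    simp only [zero_mul, Real.exp_zero, mul_one] at this
    rw [hpsum, Real.log_one] at this
    simpa using this
  have hS0 : 0 ≤ S' := le_trans hD0 hD_le
  have hH' : ∀ t : ℝ, t * (∑ i, q i * o i) ≤ S' + σ^2 * t^2 / 2 := by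
    intro t
    have hgib := gibbs_ineq q p o hq0 hp0 hqsum t
    have hZpos : 0 < ∑ i, p i * Real.exp (t * o i) := by
      have hne : Nonempty d := by
        by_contra hcon
        rw [not_nonempty_iff] at hcon
        rw [Finset.univ_eq_empty, Finset.sum_empty] at hqsum
        norm_num at hqsum
      exact Finset.sum_pos (fun i _ => mul_pos (hp0 i) (Real.exp_pos _)) Finset.univ_nonempty
    have hlog : Real.log (∑ i, p i * Real.exp (t * o i)) ≤ σ^2 * t^2/2 := by
      rw [Real.log_le_iff_le_exp hZpos]
      exact hsub t
    calc t * (∑ i, q i * o i) ≤ D + Real.log (∑ i, p i * Real.exp (t * o i)) := hgib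
      _ ≤ S' + σ^2 * t^2/2 := add_le_add hD_le hlog
  have hfin := opt_ineq (∑ i, q i * o i) S' σ hS0 hσ hH'
  exact hfin

open Complex Finset in
lemma trace_diag_mul (u : d → ℂ) (M : Matrix d d ℂ) :
    (diagonal u * M).trace = ∑ k, u k * M k k := by
  simp [Matrix.trace, Matrix.diag, Matrix.diagonal_mul]

open Complex Finset in
lemma trace_frames (U V : Matrix d d ℂ) (hU1 : U * Uᴴ = 1) (hU2 : Uᴴ * U = 1)
    (u v : d → ℂ) :
    ((U * diagonal u * Uᴴ) * (V * diagonal v * Vᴴ)).trace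
      = ∑ k, ∑ i, u k * v i * ((‖(Uᴴ * V) k i‖^2 : ℝ) : ℂ) := by
  have key : (U * diagonal u * Uᴴ) * (V * diagonal v * Vᴴ)
      = U * (diagonal u * ((Uᴴ * V) * diagonal v * (Uᴴ * V)ᴴ)) * Uᴴ := by
    simp only [conjTranspose_mul, conjTranspose_conjTranspose, ← mul_assoc]
    rw [mul_assoc _ U Uᴴ, hU1, mul_one]
  rw [key]
  have h2 : (U * (diagonal u * (Uᴴ * V * diagonal v * (Uᴴ * V)ᴴ)) * Uᴴ).trace
      = (diagonal u * ((Uᴴ * V) * diagonal v * (Uᴴ * V)ᴴ)).trace := by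
    rw [Matrix.trace_mul_cycle, ← mul_assoc, hU2, one_mul]
  rw [h2, trace_diag_mul]
  congr 1
  ext k
  rw [triple_apply, Finset.mul_sum]
  congr 1
  ext i
  rw [Matrix.conjTranspose_apply, Complex.star_def]
  push_cast
  conv_rhs => rw [← Complex.mul_conj']
  ring

open Complex Finset in
lemma trace_frames_re (U V : Matrix d d ℂ) (hU1 : U * Uᴴ = 1) (hU2 : Uᴴ * U = 1)
    (u v : d → ℝ) :
    (((U * diagonal (fun k => (u k : ℂ)) * Uᴴ) * (V * diagonal (fun i => (v i : ℂ)) * Vᴴ)).trace).re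
      = ∑ k, ∑ i, u k * v i * ‖(Uᴴ * V) k i‖^2 := by
  rw [trace_frames U V hU1 hU2]
  push_cast
  rw [Complex.re_sum]
  congr 1; ext k
  rw [Complex.re_sum]
  congr 1; ext i
  rw [← Complex.ofReal_pow, ← Complex.ofReal_mul, ← Complex.ofReal_mul, Complex.ofReal_re]

open Complex Finset in
lemma trace_frames_same (U : Matrix d d ℂ) (hU1 : U * Uᴴ = 1) (hU2 : Uᴴ * U = 1)
    (u v : d → ℂ) :
    ((U * diagonal u * Uᴴ) * (U * diagonal v * Uᴴ)).trace = ∑ k, u k * v k := by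
  have key : (U * diagonal u * Uᴴ) * (U * diagonal v * Uᴴ)
      = U * (diagonal u * diagonal v) * Uᴴ := by
    simp only [← mul_assoc]
    rw [mul_assoc _ Uᴴ U, hU2, mul_one]
  rw [key, Matrix.trace_mul_cycle, ← mul_assoc, hU2, one_mul, diagonal_mul_diagonal,
    Matrix.trace_diagonal]

open Complex Finset in
lemma trace_frames_same_re (U : Matrix d d ℂ) (hU1 : U * Uᴴ = 1) (hU2 : Uᴴ * U = 1)
    (u v : d → ℝ) :
    (((U * diagonal (fun k => (u k : ℂ)) * Uᴴ) * (U * diagonal (fun k => (v k : ℂ)) * Uᴴ)).trace).re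
      = ∑ k, u k * v k := by
  rw [trace_frames_same U hU1 hU2, Complex.re_sum]
  congr 1; ext k
  rw [← Complex.ofReal_mul, Complex.ofReal_re]

open Complex Finset in
lemma spectral_decomp {A : Matrix d d ℂ} (hA : A.IsHermitian) :
    A = (Matrix.IsHermitian.eigenvectorUnitary hA : Matrix d d ℂ)
        * diagonal (fun i => (hA.eigenvalues i : ℂ))
        * (Matrix.IsHermitian.eigenvectorUnitary hA : Matrix d d ℂ)ᴴ := by
  conv_lhs => rw [hA.spectral_theorem]
  rw [← Matrix.star_eq_conjTranspose]
  rfl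

open Complex Finset in
lemma unitary_u1 {U : Matrix.unitaryGroup d ℂ} : (U : Matrix d d ℂ) * (U : Matrix d d ℂ)ᴴ = 1 := by
  have := Matrix.mem_unitaryGroup_iff.mp U.2
  rwa [Matrix.star_eq_conjTranspose] at this

open Complex Finset in
lemma unitary_u2 {U : Matrix.unitaryGroup d ℂ} : (U : Matrix d d ℂ)ᴴ * (U : Matrix d d ℂ) = 1 := by
  have := Matrix.mem_unitaryGroup_iff'.mp U.2
  rwa [Matrix.star_eq_conjTranspose] at this

open Complex Finset in
lemma conj_prod_u1 {U V : Matrix d d ℂ} (hV1 : V * Vᴴ = 1) (hU2 : Uᴴ * U = 1) :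
    (Uᴴ * V) * (Uᴴ * V)ᴴ = 1 := by
  rw [conjTranspose_mul, conjTranspose_conjTranspose]
  calc Uᴴ * V * (Vᴴ * U) = Uᴴ * (V * Vᴴ) * U := by simp only [mul_assoc]
    _ = 1 := by rw [hV1, mul_one, hU2]

open Complex Finset in
lemma conj_prod_u2 {U V : Matrix d d ℂ} (hU1 : U * Uᴴ = 1) (hV2 : Vᴴ * V = 1) :
    (Uᴴ * V)ᴴ * (Uᴴ * V) = 1 := by
  rw [conjTranspose_mul, conjTranspose_conjTranspose]
  calc Vᴴ * U * (Uᴴ * V) = Vᴴ * (U * Uᴴ) * V := by simp only [mul_assoc]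
    _ = 1 := by rw [hU1, mul_one, hV2]

open Complex Finset in
lemma trace_conj_diag (Q : Matrix d d ℂ) (hQ2 : Qᴴ * Q = 1) (v : d → ℂ) :
    (Q * diagonal v * Qᴴ).trace = ∑ j, v j := by
  rw [Matrix.trace_mul_cycle, hQ2, one_mul, Matrix.trace_diagonal]

end QFRI

open QFRI

/-- Sub-Gaussian quantum fluctuation-response inequality. The sub-Gaussian
hypothesis on the random variable induced by `O_c` in its eigenbasis under the
probability distribution `p_i = ⟨i|γ₀|i⟩` is expressed equivalently as a bound
on `Tr(γ₀ exp(t O_c))`, which equals its moment generating function. -/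
theorem subgaussian_qfri {d : Type*} [Fintype d] [DecidableEq d]
    (γ₀ γ₁ O : Matrix d d ℂ)
    (hγ₀ : γ₀.PosDef) (hγ₀tr : γ₀.trace = 1)
    (hγ₁ : γ₁.PosSemidef) (hγ₁tr : γ₁.trace = 1)
    (hO : O.IsHermitian)
    (Oc : Matrix d d ℂ) (hOc : Oc = O - ((O * γ₀).trace) • 1)
    (σ : ℝ) (hσ : 0 ≤ σ)
    (hsub : ∀ t : ℝ, ((γ₀ * NormedSpace.exp ((t : ℂ) • Oc)).trace).re
      ≤ Real.exp (σ ^ 2 * t ^ 2 / 2)) :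
    |((γ₁ * O).trace).re - ((γ₀ * O).trace).re| ≤
      σ * Real.sqrt (2 * ((γ₁ * cfc Real.log γ₁).trace - (γ₁ * cfc Real.log γ₀).trace).re) := by
  classical
  have hne : Nonempty d := by
    by_contra hcon
    rw [not_nonempty_iff] at hcon
    rw [Matrix.trace, Finset.univ_eq_empty, Finset.sum_empty] at hγ₁tr
    exact one_ne_zero hγ₁tr.symm
  -- Oc is Hermitian
  have hc0 : star ((O * γ₀).trace) = (O * γ₀).trace := by
    rw [← Matrix.trace_conjTranspose, Matrix.conjTranspose_mul, hγ₀.isHermitian.eq, hO.eq,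
      Matrix.trace_mul_comm]
  have hOcH : Oc.IsHermitian := by
    rw [hOc]
    have : (O - (O * γ₀).trace • 1)ᴴ = Oᴴ - star ((O * γ₀).trace) • (1 : Matrix d d ℂ)ᴴ := by
      rw [Matrix.conjTranspose_sub, Matrix.conjTranspose_smul]
    rw [Matrix.IsHermitian, this, hc0, hO.eq, Matrix.conjTranspose_one]
  -- spectral data
  set P : Matrix d d ℂ := (Matrix.IsHermitian.eigenvectorUnitary hOcH : Matrix d d ℂ) with hP_def
  set o : d → ℝ := hOcH.eigenvalues with ho_def
  set Q : Matrix d d ℂ := (Matrix.IsHermitian.eigenvectorUnitary hγ₀.1 : Matrix d d ℂ) with hQ_def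
  set g : d → ℝ := hγ₀.1.eigenvalues with hg_def
  set W : Matrix d d ℂ := (Matrix.IsHermitian.eigenvectorUnitary hγ₁.1 : Matrix d d ℂ) with hW_def
  set μ : d → ℝ := hγ₁.1.eigenvalues with hμ_def
  have hP1 : P * Pᴴ = 1 := unitary_u1
  have hP2 : Pᴴ * P = 1 := unitary_u2
  have hQ1 : Q * Qᴴ = 1 := unitary_u1
  have hQ2 : Qᴴ * Q = 1 := unitary_u2
  have hW1 : W * Wᴴ = 1 := unitary_u1
  have hW2 : Wᴴ * W = 1 := unitary_u2
  have hOc_eq : Oc = P * diagonal (fun i => (o i : ℂ)) * Pᴴ := spectral_decomp hOcH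
  have hγ₀_eq : γ₀ = Q * diagonal (fun j => (g j : ℂ)) * Qᴴ := spectral_decomp hγ₀.1
  have hγ₁_eq : γ₁ = W * diagonal (fun k => (μ k : ℂ)) * Wᴴ := spectral_decomp hγ₁.1
  have hg : ∀ j, 0 < g j := fun j => hγ₀.eigenvalues_pos j
  have hμ0 : ∀ k, 0 ≤ μ k := fun k => hγ₁.eigenvalues_nonneg k
  have hgs : ∑ j, g j = 1 := by
    have h1 : γ₀.trace = ∑ j, ((g j : ℂ)) := by
      rw [hγ₀_eq] at hγ₀tr ⊢
      exact trace_conj_diag Q hQ2 _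
    rw [hγ₀tr] at h1
    have : ((∑ j, g j : ℝ) : ℂ) = 1 := by rw [Complex.ofReal_sum]; exact h1.symm
    exact_mod_cast this
  have hμs : ∑ k, μ k = 1 := by
    have h1 : γ₁.trace = ∑ k, ((μ k : ℂ)) := by
      rw [hγ₁_eq] at hγ₁tr ⊢
      exact trace_conj_diag W hW2 _
    rw [hγ₁tr] at h1
    have : ((∑ k, μ k : ℝ) : ℂ) = 1 := by rw [Complex.ofReal_sum]; exact h1.symm
    exact_mod_cast this
  -- frame-change matrices
  set A : Matrix d d ℂ := Pᴴ * Q with hA_def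
  set B : Matrix d d ℂ := Pᴴ * W with hB_def
  have hA1 : A * Aᴴ = 1 := conj_prod_u1 hQ1 hP2
  have hA2 : Aᴴ * A = 1 := conj_prod_u2 hP1 hQ2
  have hB1 : B * Bᴴ = 1 := conj_prod_u1 hW1 hP2
  have hB2 : Bᴴ * B = 1 := conj_prod_u2 hP1 hW2
  have hAB : Aᴴ * B = Qᴴ * W := by
    rw [hA_def, hB_def, Matrix.conjTranspose_mul, Matrix.conjTranspose_conjTranspose]
    calc Qᴴ * P * (Pᴴ * W) = Qᴴ * (P * Pᴴ) * W := by simp only [Matrix.mul_assoc]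
      _ = Qᴴ * W := by rw [hP1, Matrix.mul_one]
  -- scalar form of the sub-Gaussian hypothesis
  have hsub' : ∀ t : ℝ, ∑ i, (∑ j, ‖A i j‖^2 * g j) * Real.exp (t * o i)
      ≤ Real.exp (σ^2 * t^2 / 2) := by
    intro t
    have hexp : NormedSpace.exp ((t : ℂ) • Oc)
        = P * diagonal (fun i => ((Real.exp (t * o i) : ℝ) : ℂ)) * Pᴴ := by
      have h1 : (t : ℂ) • Oc = P * diagonal (fun i => ((t * o i : ℝ) : ℂ)) * Pᴴ := by
        rw [hOc_eq]
        rw [show (diagonal (fun i => ((t * o i : ℝ) : ℂ)))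
            = (t : ℂ) • diagonal (fun i => ((o i : ℝ) : ℂ)) by
          rw [← Matrix.diagonal_smul]
          apply congrArg
          funext i
          simp only [Pi.smul_apply, smul_eq_mul]
          push_cast
          ring]
        rw [Matrix.mul_smul, Matrix.smul_mul]
      have hPunit : IsUnit P := ⟨⟨P, Pᴴ, hP1, hP2⟩, rfl⟩
      have hPinv : P⁻¹ = Pᴴ := Matrix.inv_eq_left_inv hP2
      rw [h1, ← hPinv, Matrix.exp_conj P _ hPunit, hPinv, Matrix.exp_diagonal]
      have hD : (NormedSpace.exp (fun i : d => ((t * o i : ℝ) : ℂ)))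
          = fun i : d => ((Real.exp (t * o i) : ℝ) : ℂ) := by
        funext i
        rw [Pi.coe_exp, ← Complex.exp_eq_exp_ℂ, ← Complex.ofReal_exp]
      rw [hD]
    have hsubt := hsub t
    rw [hexp, hγ₀_eq,
      trace_frames_re Q P hQ1 hQ2 g (fun i => Real.exp (t * o i))] at hsubt
    refine le_trans (le_of_eq ?_) hsubt
    rw [Finset.sum_comm]
    congr 1; ext i
    rw [Finset.sum_mul]
    congr 1; ext j
    have hnorm : ‖A i j‖ = ‖(Qᴴ * P) j i‖ := by
      have : (Qᴴ * P) j i = star (A i j) := by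
        rw [hA_def, ← Matrix.conjTranspose_apply, Matrix.conjTranspose_mul,
          Matrix.conjTranspose_conjTranspose]
      rw [this, norm_star]
    rw [hnorm]
    ring
  -- perturbation sequence
  set Dc : ℝ := (Fintype.card d : ℝ) with hDc_def
  have hDc : 0 < Dc := by
    rw [hDc_def]
    exact_mod_cast Fintype.card_pos
  set ε : ℕ → ℝ := fun n => ((n : ℝ) + 1)⁻¹ with hε_def
  have hε0 : ∀ n, 0 < ε n := fun n => by positivity
  have hε1 : ∀ n, ε n ≤ 1 := by
    intro n
    rw [hε_def]
    have h0 : (0:ℝ) ≤ (n : ℝ) := Nat.cast_nonneg n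
    have h1 : (1:ℝ) ≤ (n : ℝ) + 1 := by linarith
    simpa using inv_le_one_of_one_le₀ h1
  have hεt : Filter.Tendsto ε Filter.atTop (nhds 0) := by
    have := tendsto_one_div_add_atTop_nhds_zero_nat (𝕜 := ℝ)
    simpa [hε_def, one_div] using this
  set ν : ℕ → d → ℝ := fun n k => (1 - ε n) * μ k + ε n / Dc with hν_def
  have hν0 : ∀ n k, 0 < ν n k := fun n k => add_pos_of_nonneg_of_pos
    (mul_nonneg (by linarith [hε1 n]) (hμ0 k)) (div_pos (hε0 n) hDc)
  have hνs : ∀ n, ∑ k, ν n k = 1 := by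
    intro n
    rw [hν_def]
    simp only
    rw [Finset.sum_add_distrib, ← Finset.mul_sum, hμs, Finset.sum_const, Finset.card_univ,
      nsmul_eq_mul, mul_one]
    rw [← hDc_def, mul_div_cancel₀ _ hDc.ne']
    ring
  have tendsto_ν : ∀ k, Filter.Tendsto (fun n => ν n k) Filter.atTop (nhds (μ k)) := by
    intro k
    have h1 := (((tendsto_const_nhds (x := (1:ℝ))).sub hεt).mul_const (μ k)).add
      (hεt.div_const Dc)
    simpa using h1
  -- the limit quantities
  set minf : ℝ := ∑ i, (∑ k, ‖B i k‖^2 * μ k) * o i with hminf_def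
  set Sinf : ℝ := (∑ k, μ k * Real.log (μ k))
      - ∑ j, ∑ k, ‖(Aᴴ * B) j k‖^2 * (μ k * Real.log (g j)) with hSinf_def
  have hineq : ∀ n, |∑ i, (∑ k, ‖B i k‖^2 * ν n k) * o i|
      ≤ σ * Real.sqrt (2 * ((∑ k, ν n k * Real.log (ν n k))
          - ∑ j, ∑ k, ‖(Aᴴ * B) j k‖^2 * (ν n k * Real.log (g j)))) :=
    fun n => key_scalar A B hA1 hA2 hB1 hB2 o g (ν n) hg (hν0 n) hgs (hνs n) σ hσ hsub'
  have hmt : Filter.Tendsto (fun n => ∑ i, (∑ k, ‖B i k‖^2 * ν n k) * o i)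
      Filter.atTop (nhds minf) := by
    apply tendsto_finset_sum
    intro i _
    apply Filter.Tendsto.mul_const
    apply tendsto_finset_sum
    intro k _
    exact (tendsto_ν k).const_mul _
  have hSt : Filter.Tendsto (fun n => (∑ k, ν n k * Real.log (ν n k))
      - ∑ j, ∑ k, ‖(Aᴴ * B) j k‖^2 * (ν n k * Real.log (g j)))
      Filter.atTop (nhds Sinf) := by
    apply Filter.Tendsto.sub
    · apply tendsto_finset_sum
      intro k _
      exact (Real.continuous_mul_log.continuousAt).tendsto.comp (tendsto_ν k)
    · apply tendsto_finset_sum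
      intro j _
      apply tendsto_finset_sum
      intro k _
      exact ((tendsto_ν k).mul_const _).const_mul _
  have habs : Filter.Tendsto (fun n => |∑ i, (∑ k, ‖B i k‖^2 * ν n k) * o i|)
      Filter.atTop (nhds |minf|) := continuous_abs.continuousAt.tendsto.comp hmt
  have hrhs : Filter.Tendsto (fun n => σ * Real.sqrt (2 * ((∑ k, ν n k * Real.log (ν n k))
      - ∑ j, ∑ k, ‖(Aᴴ * B) j k‖^2 * (ν n k * Real.log (g j)))))
      Filter.atTop (nhds (σ * Real.sqrt (2 * Sinf))) := by
    have h1 := Real.continuous_sqrt.continuousAt.tendsto.comp (hSt.const_mul 2)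
    exact h1.const_mul σ
  have hfinal : |minf| ≤ σ * Real.sqrt (2 * Sinf) :=
    le_of_tendsto_of_tendsto' habs hrhs hineq
  -- translate the goal
  have hTr1 : (γ₁ * Oc).trace = (γ₁ * O).trace - (γ₀ * O).trace := by
    rw [hOc, Matrix.mul_sub, Matrix.trace_sub, Matrix.mul_smul, Matrix.mul_one,
      Matrix.trace_smul, hγ₁tr, smul_eq_mul, mul_one, Matrix.trace_mul_comm O γ₀]
  have hm_eq : ((γ₁ * Oc).trace).re = minf := by
    rw [hγ₁_eq, hOc_eq, trace_frames_re W P hW1 hW2 μ o, hminf_def, Finset.sum_comm]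
    congr 1; ext i
    rw [Finset.sum_mul]
    congr 1; ext k
    have hnorm : ‖B i k‖ = ‖(Wᴴ * P) k i‖ := by
      have : (Wᴴ * P) k i = star (B i k) := by
        rw [hB_def, ← Matrix.conjTranspose_apply, Matrix.conjTranspose_mul,
          Matrix.conjTranspose_conjTranspose]
      rw [this, norm_star]
    rw [hnorm]
    ring
  have hS_eq : ((γ₁ * cfc Real.log γ₁).trace - (γ₁ * cfc Real.log γ₀).trace).re = Sinf := by
    rw [Complex.sub_re]
    have h1 : ((γ₁ * cfc Real.log γ₁).trace).re = ∑ k, μ k * Real.log (μ k) := by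
      rw [hγ₁.1.cfc_eq Real.log]
      have hcfc : hγ₁.1.cfc Real.log
          = W * diagonal (fun k => ((Real.log (μ k) : ℝ) : ℂ)) * Wᴴ := by
        rw [Matrix.IsHermitian.cfc, ← Matrix.star_eq_conjTranspose]
        rfl
      rw [hcfc, hγ₁_eq, trace_frames_same_re W hW1 hW2 μ (fun k => Real.log (μ k))]
    have h2 : ((γ₁ * cfc Real.log γ₀).trace).re
        = ∑ j, ∑ k, ‖(Aᴴ * B) j k‖^2 * (μ k * Real.log (g j)) := by
      rw [hγ₀.1.cfc_eq Real.log]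
      have hcfc : hγ₀.1.cfc Real.log
          = Q * diagonal (fun j => ((Real.log (g j) : ℝ) : ℂ)) * Qᴴ := by
        rw [Matrix.IsHermitian.cfc, ← Matrix.star_eq_conjTranspose]
        rfl
      rw [hcfc, hγ₁_eq, trace_frames_re W Q hW1 hW2 μ (fun j => Real.log (g j)),
        Finset.sum_comm]
      congr 1; ext j
      congr 1; ext k
      have hnorm : ‖(Aᴴ * B) j k‖ = ‖(Wᴴ * Q) k j‖ := by
        rw [hAB]
        have : (Wᴴ * Q) k j = star ((Qᴴ * W) j k) := by
          rw [← Matrix.conjTranspose_apply, Matrix.conjTranspose_mul,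
            Matrix.conjTranspose_conjTranspose]
        rw [this, norm_star]
      rw [hnorm]
      ring
    rw [h1, h2, hSinf_def]
  calc |((γ₁ * O).trace).re - ((γ₀ * O).trace).re|
      = |minf| := by rw [← Complex.sub_re, ← hTr1, hm_eq]
    _ ≤ σ * Real.sqrt (2 * Sinf) := hfinal
    _ = σ * Real.sqrt (2 * ((γ₁ * cfc Real.log γ₁).trace
          - (γ₁ * cfc Real.log γ₀).trace).re) := by rw [hS_eq]
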